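/- arXiv:2207.01589 — 3 statements merged into one kernel-verified Lean document; each statement's English description precedes it below -/
import Mathlib

section
/- Let I be a repeated matching instance with n agents/items and T rounds such that T mod n = n − 1, and in which all valuations are non-negative (goods), i.e., v_i(g,t) ≥ 0 for every agent i, item g, and t ∈ {1,...,T}. Then there exists a repeated matching of I that is EF1. -/
open Finset
open Fin.NatCast

/-- The number of rounds in which agent `i` is matched to item `g`
under the repeated matching `A` (a sequence of `T` bijections from agents to items). -/
def mult {α β : Type*} [DecidableEq β] {T : ℕ} (A : Fin T → α ≃ β) (i : α) (g : β) : ℕ :=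
  (Finset.univ.filter fun t : Fin T => A t i = g).card

/-- The value of a bundle with multiplicities `B` under the valuation `v`,
where `v g t` is the value of the `t`-th copy of item `g`. -/
def bundleValue {β : Type*} [Fintype β] (v : β → ℕ → ℝ) (B : β → ℕ) : ℝ :=
  ∑ g : β, ∑ t ∈ Finset.range (B g), v g (t + 1)

/-- The social welfare of a repeated matching. -/
def SW {α β : Type*} [Fintype α] [Fintype β] [DecidableEq β] {T : ℕ}
    (v : α → β → ℕ → ℝ) (A : Fin T → α ≃ β) : ℝ :=
  ∑ i : α, bundleValue (v i) (mult A i)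

/-- Remove one copy of `g` from the bundle `B` (if present; otherwise leave `B` intact). -/
def removeOne {β : Type*} [DecidableEq β] (B : β → ℕ) (g : β) : β → ℕ :=
  fun g' => if g' = g then B g' - 1 else B g'

/-- `EF1`: every agent `i` values her bundle at least as much as any other agent `j`'s
bundle after removing one copy of some item. -/
def EF1 {α β : Type*} [Fintype β] [DecidableEq β] {T : ℕ}
    (v : α → β → ℕ → ℝ) (A : Fin T → α ≃ β) : Prop :=
  ∀ i j : α, ∃ g : β,
    bundleValue (v i) (mult A i) ≥ bundleValue (v i) (removeOne (mult A j) g)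

/-- Counting multiples of `n` congruent to `c` below `T`. -/
lemma card_range_filter_mod (n c : ℕ) (hn : 0 < n) (hc : c < n) (T : ℕ) :
    ((range T).filter (fun t => t % n = c)).card
      = T / n + if c < T % n then 1 else 0 := by
  induction T with
  | zero => simp [hn.ne']
  | succ T ih =>
    rw [Finset.range_add_one, Finset.filter_insert]
    have hdm := Nat.div_add_mod T n
    have hr : T % n < n := Nat.mod_lt _ hn
    by_cases hrn : T % n + 1 < n
    · have hdiv : (T+1) / n = T / n ∧ (T+1) % n = T % n + 1 :=
        (Nat.div_mod_unique hn).2 ⟨by omega, hrn⟩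
      by_cases hTc : T % n = c
      · rw [if_pos hTc, Finset.card_insert_of_notMem (by simp), ih, hdiv.1, hdiv.2]
        split_ifs <;> omega
      · rw [if_neg hTc, ih, hdiv.1, hdiv.2]; split_ifs <;> omega
    · have hdiv : (T+1) / n = T / n + 1 ∧ (T+1) % n = 0 :=
        (Nat.div_mod_unique hn).2 ⟨by
          have h2 : n*(T/n+1) = n*(T/n)+n := by ring
          omega, hn⟩
      by_cases hTc : T % n = c
      · rw [if_pos hTc, Finset.card_insert_of_notMem (by simp), ih, hdiv.1, hdiv.2]
        split_ifs <;> omega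
      · rw [if_neg hTc, ih, hdiv.1, hdiv.2]; split_ifs <;> omega

/-- The multiplicity function of the cyclic repeated matching. -/
lemma mult_cyclic (n T : ℕ) [NeZero n] (i g : Fin n) :
    mult (fun t : Fin T => Equiv.addRight (((t : ℕ) : Fin n))) i g
      = T / n + if (g - i).val < T % n then 1 else 0 := by
  have hn : 0 < n := Nat.pos_of_ne_zero (NeZero.ne n)
  have : mult (fun t : Fin T => Equiv.addRight (((t : ℕ) : Fin n))) i g
      = ((range T).filter (fun t => t % n = (g - i).val)).card := by
    unfold mult
    rw [← Nat.Iio_eq_range, ← Fin.map_valEmbedding_univ, Finset.filter_map, Finset.card_map]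
    congr 1
    ext t
    rw [Finset.mem_filter, Finset.mem_filter]
    simp only [mem_filter, mem_univ, true_and, Equiv.coe_addRight, Function.comp,
      Fin.valEmbedding_apply]
    rw [← eq_sub_iff_add_eq', Fin.ext_iff, Fin.val_natCast]
  rw [this, card_range_filter_mod n _ hn (g - i).isLt T]

/-- Monotonicity of bundle value for nonnegative valuations. -/
lemma bundleValue_mono {β : Type*} [Fintype β] (T : ℕ) (v : β → ℕ → ℝ)
    (hv : ∀ g t, 1 ≤ t → t ≤ T → 0 ≤ v g t) (B B' : β → ℕ)
    (hle : ∀ g, B g ≤ B' g) (hT : ∀ g, B' g ≤ T) :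
    bundleValue v B ≤ bundleValue v B' := by
  unfold bundleValue
  refine Finset.sum_le_sum fun g _ => ?_
  refine Finset.sum_le_sum_of_subset_of_nonneg (Finset.range_subset_range.2 (hle g)) ?_
  intro t ht _
  exact hv g (t + 1) (by omega) (by have := Finset.mem_range.1 ht; have := hT g; omega)

/-- For goods (non-negative valuations) with `T mod n = n - 1`, an EF1 repeated
matching exists. -/
theorem stmt6 (n T : ℕ) (hn : 0 < n) (hmod : T % n = n - 1)
    (v : Fin n → Fin n → ℕ → ℝ)
    (hnonneg : ∀ (i g : Fin n) (t : ℕ), 1 ≤ t → t ≤ T → 0 ≤ v i g t) :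
    ∃ A : Fin T → Fin n ≃ Fin n, EF1 v A := by
  haveI : NeZero n := ⟨hn.ne'⟩
  set A : Fin T → Fin n ≃ Fin n := fun t => Equiv.addRight (((t : ℕ) : Fin n)) with hA
  refine ⟨A, ?_⟩
  intro i j
  refine ⟨(⟨n - 1, by omega⟩ : Fin n) + i, ?_⟩
  have hmultT : ∀ g : Fin n, mult A i g ≤ T := by
    intro g
    have := Finset.card_filter_le (Finset.univ : Finset (Fin T)) (fun t => A t i = g)
    simpa [mult] using this
  refine bundleValue_mono T (v i) (hnonneg i) _ _ ?_ hmultT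
  intro g
  have hmi : mult A i g = T / n + if (g - i).val < T % n then 1 else 0 :=
    mult_cyclic n T i g
  have hmj : mult A j g = T / n + if (g - j).val < T % n then 1 else 0 :=
    mult_cyclic n T j g
  unfold removeOne
  by_cases hg : g = (⟨n - 1, by omega⟩ : Fin n) + i
  · rw [if_pos hg]
    have hgi : (g - i).val = n - 1 := by
      rw [hg, add_sub_cancel_right]
    rw [hmod, hgi] at hmi
    rw [hmod] at hmj
    rw [hmi, hmj]
    generalize T / n = q
    split_ifs <;> omega
  · rw [if_neg hg]
    have hgi : (g - i).val < n - 1 := by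
      have h1 : (g - i).val < n := (g - i).isLt
      have h2 : (g - i).val ≠ n - 1 := by
        intro h
        apply hg
        have h3 : g - i = (⟨n - 1, by omega⟩ : Fin n) := Fin.ext h
        rw [← h3, sub_add_cancel]
      omega
    rw [hmod] at hmi hmj
    rw [hmi, hmj]
    generalize T / n = q
    split_ifs <;> omega
end

section
/- Let G = (V,E) be a finite graph with no isolated vertices, let 0 < δ < |V|^{−2}, and construct the repeated matching instance I(G) with T = |V| rounds and n = (2|V|+1)|E| + 1 agents as follows. The agents are 'edge agents' (e,i) for each e ∈ E and i ∈ {1,...,2|V|+1}, plus one 'special agent' s. The items are one 'node item' g_u for each u ∈ V, plus n − |V| 'dummy items'. Valuations: for every edge e = (x,y), every i, every u ∈ V, and every t, v_{(e,i)}(g_u,t) = δ if u ∈ {x,y} and 0 otherwise; v_s(g_u,t) = 1 for every u ∈ V and t; all agents value every copy of every dummy item at 0. Then in every repeated matching A of I(G), for every edge e ∈ E there exists i ∈ {1,...,2|V|+1} such that the edge agent (e,i) has value 0, i.e., v_{(e,i)}(A_{(e,i)}) = 0. -/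
open Finset

/-- The valuation in the instance `I(G)` constructed from a graph `G`:
agents are pairs (edge, copy-index in `Fin (2|V|+1)`) plus a special agent
(`Sum.inr ()`), items are node items (`Sum.inl u` for `u : V`) plus `N` dummy
items.  An edge agent values every copy of a node item of an endpoint of its edge
at `δ`, the special agent values every copy of every node item at `1`, and all
other values are `0`. -/
def graphVal {V : Type*} [Fintype V] [DecidableEq V] (G : SimpleGraph V)
    [DecidableRel G.Adj] (δ : ℝ) (N : ℕ) :
    ((G.edgeFinset × Fin (2 * Fintype.card V + 1)) ⊕ Unit) → (V ⊕ Fin N) → ℕ → ℝ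
  | Sum.inl ei, Sum.inl u, _ => if u ∈ (ei.1 : Sym2 V) then δ else 0
  | Sum.inr _, Sum.inl _, _ => 1
  | _, Sum.inr _, _ => 0


lemma mult_sum_all {α β : Type*} [Fintype α] [Fintype β] [DecidableEq β] {T : ℕ}
    (A : Fin T → α ≃ β) (g : β) : ∑ i : α, mult A i g = T := by
  simp only [mult, Finset.card_filter]
  rw [Finset.sum_comm]
  have h1 : ∀ t : Fin T, (∑ i : α, if A t i = g then (1 : ℕ) else 0) = 1 := by
    intro t
    rw [Finset.sum_eq_single ((A t).symm g)]
    · simp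
    · intro i _ hi
      rw [if_neg]
      intro h
      exact hi (by rw [← h, Equiv.symm_apply_apply])
    · simp
  rw [Finset.sum_congr rfl (fun t _ => h1 t), Finset.sum_const, Finset.card_univ,
    Fintype.card_fin, smul_eq_mul, mul_one]

lemma sum_mult_le {α β γ : Type*} [Fintype α] [Fintype β] [Fintype γ] [DecidableEq β] {T : ℕ}
    (A : Fin T → α ≃ β) (g : β) (f : γ ↪ α) :
    ∑ i : γ, mult A (f i) g ≤ T := by
  rw [← Finset.sum_map Finset.univ f (fun a => mult A a g)]
  calc (Finset.univ.map f).sum (fun a => mult A a g)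
      ≤ ∑ a : α, mult A a g := Finset.sum_le_sum_of_subset (Finset.subset_univ _)
    _ = T := mult_sum_all A g

lemma bundle_zero {V : Type*} [Fintype V] [DecidableEq V] (G : SimpleGraph V)
    [DecidableRel G.Adj] (δ : ℝ) (N : ℕ)
    (ei : G.edgeFinset × Fin (2 * Fintype.card V + 1)) (B : V ⊕ Fin N → ℕ)
    (hB : ∀ u : V, u ∈ (ei.1 : Sym2 V) → B (Sum.inl u) = 0) :
    bundleValue (graphVal G δ N (Sum.inl ei)) B = 0 := by
  refine Finset.sum_eq_zero fun g _ => ?_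
  match g with
  | Sum.inr d => simp [graphVal]
  | Sum.inl u =>
      by_cases h : u ∈ (ei.1 : Sym2 V)
      · rw [hB u h]; simp
      · refine Finset.sum_eq_zero fun t _ => ?_
        simp [graphVal, h]

/-- In every repeated matching of the instance `I(G)` constructed from a graph `G`
with no isolated vertices, for every edge `e` there is a copy-index `i` such that
the edge agent `(e, i)` has value `0` for her bundle. -/
theorem stmt10 {V : Type*} [Fintype V] [DecidableEq V] (G : SimpleGraph V)
    [DecidableRel G.Adj]
    (hiso : ∀ x : V, ∃ y : V, G.Adj x y)
    (δ : ℝ) (hδ0 : 0 < δ) (hδ1 : δ < 1 / (Fintype.card V : ℝ) ^ 2)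
    (N : ℕ) (hN : N = (2 * Fintype.card V + 1) * G.edgeFinset.card + 1 - Fintype.card V)
    (A : Fin (Fintype.card V) →
      ((G.edgeFinset × Fin (2 * Fintype.card V + 1)) ⊕ Unit) ≃ (V ⊕ Fin N)) :
    ∀ e : G.edgeFinset, ∃ i : Fin (2 * Fintype.card V + 1),
      bundleValue (graphVal G δ N (Sum.inl (e, i))) (mult A (Sum.inl (e, i))) = 0 := by
  rintro ⟨e, he⟩
  obtain ⟨x, y, rfl⟩ : ∃ x y, e = s(x, y) := Sym2.inductionOn e fun x y => ⟨x, y, rfl⟩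
  by_contra hc
  push_neg at hc
  have h1 : ∀ i : Fin (2 * Fintype.card V + 1),
      1 ≤ mult A (Sum.inl (⟨s(x, y), he⟩, i)) (Sum.inl x)
        + mult A (Sum.inl (⟨s(x, y), he⟩, i)) (Sum.inl y) := by
    intro i
    by_contra h0
    push_neg at h0
    apply hc i
    apply bundle_zero
    intro u hu
    simp only [Sym2.mem_iff] at hu
    rcases hu with rfl | rfl <;> omega
  have key : ∑ i : Fin (2 * Fintype.card V + 1),
      (mult A (Sum.inl (⟨s(x, y), he⟩, i)) (Sum.inl x)
        + mult A (Sum.inl (⟨s(x, y), he⟩, i)) (Sum.inl y)) ≤ 2 * Fintype.card V := by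
    have hinj : Function.Injective
        (fun i : Fin (2 * Fintype.card V + 1) =>
          (Sum.inl ((⟨s(x, y), he⟩ : G.edgeFinset), i) :
            (G.edgeFinset × Fin (2 * Fintype.card V + 1)) ⊕ Unit)) := by
      intro a b hab; simpa using hab
    rw [Finset.sum_add_distrib]
    have hx := sum_mult_le A (Sum.inl x) ⟨_, hinj⟩
    have hy := sum_mult_le A (Sum.inl y) ⟨_, hinj⟩
    simp only [Function.Embedding.coeFn_mk] at hx hy
    omega
  have h2 := Finset.card_nsmul_le_sum Finset.univ
    (fun i : Fin (2 * Fintype.card V + 1) =>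
      mult A (Sum.inl (⟨s(x, y), he⟩, i)) (Sum.inl x)
        + mult A (Sum.inl (⟨s(x, y), he⟩, i)) (Sum.inl y)) 1 (fun i _ => h1 i)
  simp only [Finset.card_univ, Fintype.card_fin, smul_eq_mul, mul_one] at h2
  omega
end

section
/- Let G = (V,E) be a finite graph with no isolated vertices, let 0 < δ < |V|^{−2}, and construct the repeated matching instance I(G) with T = |V| rounds and n = (2|V|+1)|E| + 1 agents as follows. The agents are 'edge agents' (e,i) for each e ∈ E and i ∈ {1,...,2|V|+1}, plus one 'special agent' s. The items are one 'node item' g_u for each u ∈ V, plus n − |V| 'dummy items'. Valuations: for every edge e = (x,y), every i, every u ∈ V, and every t, v_{(e,i)}(g_u,t) = δ if u ∈ {x,y} and 0 otherwise; v_s(g_u,t) = 1 for every u ∈ V and t; all agents value every copy of every dummy item at 0. Then in every EF1 repeated matching A of I(G), for every edge e = (x,y) ∈ E the bundle A_s of the special agent contains at most one copy in total from the items g_x and g_y; consequently, the set {u ∈ V : A_s contains at least one copy of g_u} is an independent set of G. -/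
open Finset

lemma sum_mult {α β : Type*} [Fintype α] [DecidableEq α] [Fintype β] [DecidableEq β] {T : ℕ}
    (A : Fin T → α ≃ β) (g : β) : ∑ i : α, mult A i g = T := by
  simp only [mult, Finset.card_filter]
  rw [Finset.sum_comm]
  simp [Equiv.apply_eq_iff_eq_symm_apply]

lemma edgeAgentVal {V : Type*} [Fintype V] [DecidableEq V] (G : SimpleGraph V)
    [DecidableRel G.Adj] (δ : ℝ) (N : ℕ) (e : G.edgeFinset)
    (i : Fin (2 * Fintype.card V + 1)) (x y : V) (hxy : x ≠ y)
    (hex : (e : Sym2 V) = s(x, y)) (B : V ⊕ Fin N → ℕ) :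
    bundleValue (graphVal G δ N (Sum.inl (e, i))) B
      = δ * ((B (Sum.inl x) : ℝ) + (B (Sum.inl y) : ℝ)) := by
  simp only [bundleValue, graphVal, Fintype.sum_sum_type, Finset.sum_const,
    Finset.card_range, smul_eq_mul, mul_ite, mul_zero, hex, Sym2.mem_iff, smul_zero,
    Finset.sum_const_zero, add_zero]
  have h1 : ∀ u : V, B (Sum.inl u) • (if u = x ∨ u = y then δ else 0)
      = if u = x ∨ u = y then (B (Sum.inl u) : ℝ) * δ else 0 := by
    intro u; split <;> simp
  simp only [h1]
  rw [← Finset.sum_filter]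
  have : Finset.univ.filter (fun u : V => u = x ∨ u = y) = {x, y} := by
    ext u; simp
  rw [this, Finset.sum_pair hxy]
  ring

/-- In every EF1 repeated matching of the instance `I(G)` constructed from a graph
`G` with no isolated vertices, the special agent gets at most one copy in total
from the two node items of any edge; consequently, the set of nodes whose node
item appears in the special agent's bundle is an independent set of `G`. -/
theorem stmt11 {V : Type*} [Fintype V] [DecidableEq V] (G : SimpleGraph V)
    [DecidableRel G.Adj]
    (hiso : ∀ x : V, ∃ y : V, G.Adj x y)
    (δ : ℝ) (hδ0 : 0 < δ) (hδ1 : δ < 1 / (Fintype.card V : ℝ) ^ 2)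
    (N : ℕ) (hN : N = (2 * Fintype.card V + 1) * G.edgeFinset.card + 1 - Fintype.card V)
    (A : Fin (Fintype.card V) →
      ((G.edgeFinset × Fin (2 * Fintype.card V + 1)) ⊕ Unit) ≃ (V ⊕ Fin N))
    (hEF1 : EF1 (graphVal G δ N) A) :
    (∀ x y : V, G.Adj x y →
        mult A (Sum.inr ()) (Sum.inl x) + mult A (Sum.inr ()) (Sum.inl y) ≤ 1) ∧
    (∀ x y : V, 1 ≤ mult A (Sum.inr ()) (Sum.inl x) →
        1 ≤ mult A (Sum.inr ()) (Sum.inl y) → ¬ G.Adj x y) := by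
  have part1 : ∀ x y : V, G.Adj x y →
      mult A (Sum.inr ()) (Sum.inl x) + mult A (Sum.inr ()) (Sum.inl y) ≤ 1 := by
    intro x y hadj
    by_contra hcon
    push_neg at hcon
    have he : s(x, y) ∈ G.edgeFinset := by
      rw [SimpleGraph.mem_edgeFinset, SimpleGraph.mem_edgeSet]; exact hadj
    set F : ((G.edgeFinset × Fin (2 * Fintype.card V + 1)) ⊕ Unit) → ℕ :=
      fun a => mult A a (Sum.inl x) + mult A a (Sum.inl y) with hF
    have htot : ∑ a, F a = 2 * Fintype.card V := by
      rw [hF, Finset.sum_add_distrib, sum_mult, sum_mult]; ring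
    have hdecomp : ∑ a, F a
        = (∑ e' : G.edgeFinset, ∑ i : Fin (2 * Fintype.card V + 1), F (Sum.inl (e', i)))
          + F (Sum.inr ()) := by
      rw [Fintype.sum_sum_type, Fintype.sum_prod_type]
      simp
    have hsingle : ∑ i : Fin (2 * Fintype.card V + 1), F (Sum.inl (⟨s(x, y), he⟩, i))
        ≤ ∑ e' : G.edgeFinset, ∑ i : Fin (2 * Fintype.card V + 1), F (Sum.inl (e', i)) :=
      Finset.single_le_sum
        (f := fun e' : G.edgeFinset => ∑ i : Fin (2 * Fintype.card V + 1), F (Sum.inl (e', i)))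
        (fun _ _ => Nat.zero_le _) (Finset.mem_univ _)
    have hzero : ∃ i : Fin (2 * Fintype.card V + 1), F (Sum.inl (⟨s(x, y), he⟩, i)) = 0 := by
      by_contra hall
      push_neg at hall
      have h1 : ∀ i ∈ (Finset.univ : Finset (Fin (2 * Fintype.card V + 1))),
          1 ≤ F (Sum.inl (⟨s(x, y), he⟩, i)) :=
        fun i _ => Nat.one_le_iff_ne_zero.mpr (hall i)
      have h2 := Finset.card_nsmul_le_sum Finset.univ
        (fun i => F (Sum.inl (⟨s(x, y), he⟩, i))) 1 h1
      simp only [Finset.card_univ, Fintype.card_fin, smul_eq_mul, mul_one] at h2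
      have hFs : 2 ≤ F (Sum.inr ()) := hcon
      omega
    obtain ⟨i0, hi0⟩ := hzero
    obtain ⟨g, hg⟩ := hEF1 (Sum.inl (⟨s(x, y), he⟩, i0)) (Sum.inr ())
    rw [edgeAgentVal G δ N _ i0 x y hadj.ne rfl,
        edgeAgentVal G δ N _ i0 x y hadj.ne rfl] at hg
    have hx0 : mult A (Sum.inl (⟨s(x, y), he⟩, i0)) (Sum.inl x) = 0 := by
      have := hi0; simp only [hF] at this; omega
    have hy0 : mult A (Sum.inl (⟨s(x, y), he⟩, i0)) (Sum.inl y) = 0 := by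
      have := hi0; simp only [hF] at this; omega
    have hrem : 1 ≤ removeOne (mult A (Sum.inr ())) g (Sum.inl x)
        + removeOne (mult A (Sum.inr ())) g (Sum.inl y) := by
      have hne : (Sum.inl x : V ⊕ Fin N) ≠ Sum.inl y := by
        simp only [ne_eq, Sum.inl.injEq]; exact hadj.ne
      simp only [removeOne]
      split_ifs with h1 h2 h2
      · exact absurd (h1.trans h2.symm) hne
      all_goals omega
    have hrem' : (1 : ℝ) ≤ (removeOne (mult A (Sum.inr ())) g (Sum.inl x) : ℝ)
        + (removeOne (mult A (Sum.inr ())) g (Sum.inl y) : ℝ) := by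
      exact_mod_cast hrem
    rw [hx0, hy0] at hg
    simp only [Nat.cast_zero, add_zero, mul_zero] at hg
    nlinarith
  refine ⟨part1, ?_⟩
  intro x y hx hy hadj
  have := part1 x y hadj
  omega
end
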